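/- arXiv:0902.0411 — 4 statements merged into one kernel-verified Lean document; each statement's English description precedes it below -/
import Mathlib

section
/- Let E be a finite linearly ordered set and I an irreflexive symmetric relation on E, and let {*} be the one-point pointed M(E,I)-set (so *·e = * for all e ∈ E). Then every differential of the chain complex A({*}) is the zero homomorphism, and consequently H_s(A({*})) ≅ ℤ^{p_s} for every s ≥ 0, where p_s is the number of s-cliques. (This computes the homology of the free partially commutative monoid M(E,I) with constant coefficients ℤ.) -/
/-!
Common setup: free partially commutative monoid `M(E,I)` data, cliques of the
commutation relation, the augmented clique chain complex `K(E,I)`, the chain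
complexes `A(X^•)` and `B(X^•)` of a pointed `M(E,I)`-set, and their homology.

A pointed `M(E,I)`-set with underlying non-base part `X` is modelled as an
action `act : Option X → E → Option X`, where `none` is the base point `*`.
-/

namespace PCMHomology

variable {E : Type*} [LinearOrder E] [Fintype E]

/-- `S` is a clique for the relation `I`: distinct elements pairwise satisfy `I`. -/
def IsClique (I : E → E → Prop) (S : Finset E) : Prop :=
  ∀ a ∈ S, ∀ b ∈ S, a ≠ b → I a b

/-- The type of `s`-cliques: `s`-element subsets of `E` whose elements pairwise
commute (satisfy `I`). -/
def Clique (I : E → E → Prop) (s : ℕ) : Type _ :=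
  {S : Finset E // S.card = s ∧ IsClique I S}

/-- `p_s`, the number of `s`-cliques. -/
noncomputable def pClique (I : E → E → Prop) (s : ℕ) : ℕ :=
  Nat.card (Clique I s)

/-- Removing an element of an `(s+1)`-clique yields an `s`-clique. -/
def faceClique {I : E → E → Prop} {s : ℕ} (S : Clique I (s + 1))
    (e : {a // a ∈ S.val}) : Clique I s :=
  ⟨S.val.erase e.val, by
    refine ⟨?_, ?_⟩
    · rw [Finset.card_erase_of_mem e.property, S.property.1]; rfl
    · intro a ha b hb hab
      exact S.property.2 a (Finset.mem_of_mem_erase ha) b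
        (Finset.mem_of_mem_erase hb) hab⟩

/-- If `e` is the `k`-th element of the clique `S = {e_1 < ⋯ < e_{s+1}}` then
`posIdx S e = k - 1`, the number of elements of `S` smaller than `e`. -/
def posIdx {I : E → E → Prop} {s : ℕ} (S : Clique I (s + 1))
    (e : {a // a ∈ S.val}) : ℕ :=
  (S.val.filter (fun a => a < e.val)).card

/-- Degree-`s` component of the augmented clique chain complex `K(E,I)`:
the free abelian group on the `s`-cliques. -/
abbrev KC (I : E → E → Prop) (s : ℕ) : Type _ := Clique I s →₀ ℤ

/-- The differential of `K(E,I)`: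
`d (e_1,…,e_{s+1}) = ∑ (-1)^(k+1) (e_1,…,ê_k,…,e_{s+1})`. -/
noncomputable def Kd (I : E → E → Prop) (s : ℕ) : KC I (s + 1) →+ KC I s :=
  Finsupp.liftAddHom fun S => zmultiplesHom _
    (∑ e ∈ S.val.attach,
      ((-1 : ℤ) ^ posIdx S e) • Finsupp.single (faceClique S e) (1 : ℤ))

/-- Degree-`s` component of the chain complex `A(X^•)`: the free abelian group
on pairs `(x, S)` with `x ∈ X^•` (including the base point `* = none`) and `S`
an `s`-clique. -/
abbrev AC (I : E → E → Prop) (X : Type*) (s : ℕ) : Type _ :=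
  (Option X × Clique I s) →₀ ℤ

/-- The differential of `A(X^•)`:
`d (x; e_1,…,e_{s+1}) = ∑ (-1)^k ((x·e_k; …ê_k…) - (x; …ê_k…))`. -/
noncomputable def Ad (I : E → E → Prop) {X : Type*}
    (act : Option X → E → Option X) (s : ℕ) : AC I X (s + 1) →+ AC I X s :=
  Finsupp.liftAddHom fun p => zmultiplesHom _
    (∑ e ∈ p.2.val.attach, ((-1 : ℤ) ^ (posIdx p.2 e + 1)) •
      (Finsupp.single (act p.1 e.val, faceClique p.2 e) (1 : ℤ)
        - Finsupp.single (p.1, faceClique p.2 e) (1 : ℤ)))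

/-- Degree-`s` component of the chain complex `B(X^•)`: the free abelian group
on pairs `(x, S)` with `x ∈ X` (so `x ≠ *`) and `S` an `s`-clique. -/
abbrev BC (I : E → E → Prop) (X : Type*) (s : ℕ) : Type _ :=
  (X × Clique I s) →₀ ℤ

/-- The generator `(x·e; T)` of `B(X^•)`, interpreted as `0` when `x·e = *`. -/
noncomputable def bGen {I : E → E → Prop} {X : Type*} {s : ℕ} (o : Option X) (T : Clique I s) :
    BC I X s :=
  o.elim 0 (fun y => Finsupp.single (y, T) (1 : ℤ))

/-- The differential of `B(X^•)`:
`d (x; e_1,…,e_{s+1}) = ∑ (-1)^k ((x·e_k; …ê_k…) - (x; …ê_k…))`, with a term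
`(x·e_k; T)` interpreted as `0` when `x·e_k = *`. -/
noncomputable def Bd (I : E → E → Prop) {X : Type*}
    (act : Option X → E → Option X) (s : ℕ) : BC I X (s + 1) →+ BC I X s :=
  Finsupp.liftAddHom fun p => zmultiplesHom _
    (∑ e ∈ p.2.val.attach, ((-1 : ℤ) ^ (posIdx p.2 e + 1)) •
      (bGen (act (some p.1) e.val) (faceClique p.2 e)
        - Finsupp.single (p.1, faceClique p.2 e) (1 : ℤ)))

/-- Homology at `C1` of `C2 -d2→ C1 -d1→ C0`: the kernel of `d1` modulo (its
intersection with) the image of `d2`. -/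
abbrev homologyOf {C2 C1 C0 : Type*} [AddCommGroup C2] [AddCommGroup C1]
    [AddCommGroup C0] (d1 : C1 →+ C0) (d2 : C2 →+ C1) : Type _ :=
  d1.ker ⧸ ((d2.range).addSubgroupOf d1.ker)

/-- The homology groups of a nonnegatively graded chain complex `(C, d)`;
in degree `0` this is `C 0 / im (d 0)`. -/
def Hmlgy (C : ℕ → Type*) [∀ n, AddCommGroup (C n)]
    (d : ∀ n, C (n + 1) →+ C n) : ℕ → Type _
  | 0 => homologyOf (0 : C 0 →+ PUnit.{1}) (d 0)
  | (s + 1) => homologyOf (d s) (d (s + 1))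

instance hmlgyAddCommGroup (C : ℕ → Type*) [∀ n, AddCommGroup (C n)]
    (d : ∀ n, C (n + 1) →+ C n) : ∀ s, AddCommGroup (Hmlgy C d s)
  | 0 => inferInstanceAs (AddCommGroup (homologyOf (0 : C 0 →+ PUnit.{1}) (d 0)))
  | (s + 1) => inferInstanceAs (AddCommGroup (homologyOf (d s) (d (s + 1))))

end PCMHomology

namespace PCMHomology

/-- The kernel of the zero map is equivalent to the whole group. -/
def kerZeroEquiv {A B : Type*} [AddCommGroup A] [AddCommGroup B] :
    (AddMonoidHom.ker (0 : A →+ B)) ≃+ A where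
  toFun := Subtype.val
  invFun a := ⟨a, by simp [AddMonoidHom.mem_ker]⟩
  left_inv _ := rfl
  right_inv _ := rfl
  map_add' _ _ := rfl

/-- Homology of a complex with zero differentials. -/
noncomputable def homologyZeroZero {A B C : Type*} [AddCommGroup A] [AddCommGroup B]
    [AddCommGroup C] :
    homologyOf (0 : A →+ B) (0 : C →+ A) ≃+ A := by
  have h1 : ((0 : C →+ A).range).addSubgroupOf (AddMonoidHom.ker (0 : A →+ B)) = ⊥ := by
    ext x
    rw [AddSubgroup.mem_addSubgroupOf, AddMonoidHom.mem_range, AddSubgroup.mem_bot]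
    constructor
    · rintro ⟨c, hc⟩
      exact Subtype.ext hc.symm
    · rintro rfl
      exact ⟨0, rfl⟩
  exact ((QuotientAddGroup.quotientAddEquivOfEq h1).trans
    QuotientAddGroup.quotientBot).trans kerZeroEquiv

/-- For the one-point pointed `M(E,I)`-set `{*}` (here
`X = Empty`, so `X^• = Option Empty ≅ {*}`), every differential of `A({*})`
is zero, and `H_s(A({*})) ≅ ℤ^{p_s}` for every `s ≥ 0`, where `p_s` is the
number of `s`-cliques. -/
theorem stmt2 {E : Type*} [LinearOrder E] [Fintype E]
    (I : E → E → Prop) (hirr : ∀ e, ¬ I e e) (hsym : ∀ e e', I e e' → I e' e)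
    (act : Option Empty → E → Option Empty)
    (hstar : ∀ e, act none e = none) :
    (∀ s : ℕ, Ad I act s = 0) ∧
    (∀ s : ℕ, Nonempty
      (Hmlgy (AC I Empty) (Ad I act) s ≃+ (Fin (pClique I s) → ℤ))) := by
  classical
  have hnone : ∀ o : Option Empty, o = none := fun o => by
    cases o with
    | none => rfl
    | some x => exact x.elim
  have hAd : ∀ s : ℕ, Ad I act s = 0 := by
    intro s
    refine Finsupp.addHom_ext fun p n => ?_
    rw [Ad, Finsupp.liftAddHom_apply_single]
    have : (∑ e ∈ p.2.val.attach, ((-1 : ℤ) ^ (posIdx p.2 e + 1)) •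
        (Finsupp.single (act p.1 e.val, faceClique p.2 e) (1 : ℤ)
          - Finsupp.single (p.1, faceClique p.2 e) (1 : ℤ))) = 0 := by
      refine Finset.sum_eq_zero fun e _ => ?_
      rw [hnone p.1, hstar, sub_self, smul_zero]
    simp [this]
  refine ⟨hAd, fun s => ?_⟩
  -- The degree-s component is equivalent to functions on s-cliques.
  haveI : Finite (Clique I s) :=
    inferInstanceAs (Finite {S : Finset E // S.card = s ∧ IsClique I S})
  haveI : Fintype (Clique I s) := Fintype.ofFinite _
  have hcard : Fintype.card (Clique I s) = pClique I s := by
    rw [pClique, Nat.card_eq_fintype_card]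
  have eC : Clique I s ≃ Fin (pClique I s) :=
    (Fintype.equivFinOfCardEq hcard)
  have eA : AC I Empty s ≃+ (Fin (pClique I s) → ℤ) := by
    exact AddEquiv.trans (Finsupp.domCongr (M := ℤ)
      ((Equiv.prodCongr ((Equiv.equivPUnit (Option Empty)) : Option Empty ≃ PUnit.{1})
        (Equiv.refl (Clique I s))).trans
        ((Equiv.punitProd (Clique I s)).trans eC)))
      (AddEquiv.mk' Finsupp.equivFunOnFinite fun _ _ => rfl)
  -- Homology with zero differentials is the whole group.
  cases s with
  | zero =>
    refine ⟨AddEquiv.trans ?_ eA⟩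
    show homologyOf (0 : AC I Empty 0 →+ PUnit.{1}) (Ad I act 0) ≃+ AC I Empty 0
    rw [hAd 0]
    exact homologyZeroZero
  | succ t =>
    refine ⟨AddEquiv.trans ?_ eA⟩
    show homologyOf (Ad I act t) (Ad I act (t + 1)) ≃+ AC I Empty (t + 1)
    rw [hAd t, hAd (t + 1)]
    exact homologyZeroZero

end PCMHomology
end

section
/- Let E be a finite linearly ordered set, I an irreflexive symmetric relation on E, and X^• any finite pointed M(E,I)-set. Then for every s ≥ 1 there is an isomorphism of abelian groups H_s(A(X^•)) ≅ H_s(B(X^•)) ⊕ ℤ^{p_s}, where p_s is the number of s-cliques. (In the paper's language: lim_s Δℤ ≅ lim_s ℤ[x_0,…,x_n] ⊕ lim_s^{M(E,I)} Δℤ.) -/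
namespace PCMHomology



set_option linter.unusedSectionVars false

section Split

variable {E : Type*} [LinearOrder E] [Fintype E]
variable (I : E → E → Prop) (X : Type*) (act : Option X → E → Option X)

/-- Forget the point: `(x,S) ↦ S`. -/
noncomputable def epsHom (s : ℕ) : AC I X s →+ (Clique I s →₀ ℤ) :=
  Finsupp.liftAddHom fun p => zmultiplesHom _ (Finsupp.single p.2 (1 : ℤ))

/-- Quotient to `B`: `(x,S) ↦ (x,S)` for `x ≠ *`, `(*,S) ↦ 0`. -/
noncomputable def qHom (s : ℕ) : AC I X s →+ BC I X s :=
  Finsupp.liftAddHom fun p => zmultiplesHom _ (bGen p.1 p.2)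

/-- Section of `qHom`: `(x,S) ↦ (x,S) - (*,S)`. -/
noncomputable def sigmaHom (s : ℕ) : BC I X s →+ AC I X s :=
  Finsupp.liftAddHom fun p => zmultiplesHom _
    (Finsupp.single (some p.1, p.2) (1 : ℤ) - Finsupp.single (none, p.2) (1 : ℤ))

/-- Inclusion of the base-point part: `S ↦ (*,S)`. -/
noncomputable def iotaHom (s : ℕ) : (Clique I s →₀ ℤ) →+ AC I X s :=
  Finsupp.liftAddHom fun S => zmultiplesHom _ (Finsupp.single ((none : Option X), S) (1 : ℤ))

@[simp] lemma epsHom_single (s : ℕ) (p : Option X × Clique I s) (n : ℤ) :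
    epsHom I X s (Finsupp.single p n) = Finsupp.single p.2 n := by
  simp [epsHom, Finsupp.liftAddHom_apply_single, Finsupp.smul_single]

@[simp] lemma qHom_single (s : ℕ) (p : Option X × Clique I s) (n : ℤ) :
    qHom I X s (Finsupp.single p n) = n • bGen p.1 p.2 := by
  simp [qHom, Finsupp.liftAddHom_apply_single]

@[simp] lemma sigmaHom_single (s : ℕ) (p : X × Clique I s) (n : ℤ) :
    sigmaHom I X s (Finsupp.single p n)
      = n • (Finsupp.single (some p.1, p.2) (1 : ℤ) - Finsupp.single (none, p.2) (1 : ℤ)) := by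
  simp [sigmaHom, Finsupp.liftAddHom_apply_single]

@[simp] lemma iotaHom_single (s : ℕ) (S : Clique I s) (n : ℤ) :
    iotaHom I X s (Finsupp.single S n) = Finsupp.single ((none : Option X), S) n := by
  simp [iotaHom, Finsupp.liftAddHom_apply_single, Finsupp.smul_single]

@[simp] lemma bGen_some (s : ℕ) (y : X) (T : Clique I s) :
    (bGen (some y) T : BC I X s) = Finsupp.single (y, T) 1 := rfl

@[simp] lemma bGen_none (s : ℕ) (T : Clique I s) : (bGen (none : Option X) T : BC I X s) = 0 := rfl

lemma Ad_single (s : ℕ) (p : Option X × Clique I (s + 1)) :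
    Ad I act s (Finsupp.single p 1)
      = ∑ e ∈ p.2.val.attach, ((-1 : ℤ) ^ (posIdx p.2 e + 1)) •
          (Finsupp.single (act p.1 e.val, faceClique p.2 e) (1 : ℤ)
            - Finsupp.single (p.1, faceClique p.2 e) (1 : ℤ)) := by
  simp [Ad, Finsupp.liftAddHom_apply_single]

lemma Bd_single (s : ℕ) (p : X × Clique I (s + 1)) :
    Bd I act s (Finsupp.single p 1)
      = ∑ e ∈ p.2.val.attach, ((-1 : ℤ) ^ (posIdx p.2 e + 1)) •
          (bGen (act (some p.1) e.val) (faceClique p.2 e)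
            - Finsupp.single (p.1, faceClique p.2 e) (1 : ℤ)) := by
  simp [Bd, Finsupp.liftAddHom_apply_single]

variable {I X act}

lemma sigma_bGen (s : ℕ) (o : Option X) (T : Clique I s) :
    sigmaHom I X s (bGen o T)
      = Finsupp.single (o, T) (1 : ℤ) - Finsupp.single (none, T) (1 : ℤ) := by
  cases o <;> simp [bGen]

/-- `q ∘ σ = id`. -/
lemma q_sigma (s : ℕ) (b : BC I X s) : qHom I X s (sigmaHom I X s b) = b := by
  suffices h : (qHom I X s).comp (sigmaHom I X s) = AddMonoidHom.id _ from
    DFunLike.congr_fun h b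
  ext p
  simp

/-- `ε ∘ σ = 0`. -/
lemma eps_sigma (s : ℕ) (b : BC I X s) : epsHom I X s (sigmaHom I X s b) = 0 := by
  suffices h : (epsHom I X s).comp (sigmaHom I X s) = 0 from DFunLike.congr_fun h b
  ext p
  simp

/-- `ε ∘ ι = id`. -/
lemma eps_iota (s : ℕ) (n : Clique I s →₀ ℤ) : epsHom I X s (iotaHom I X s n) = n := by
  suffices h : (epsHom I X s).comp (iotaHom I X s) = AddMonoidHom.id _ from
    DFunLike.congr_fun h n
  ext S
  simp

/-- `q ∘ ι = 0`. -/
lemma q_iota (s : ℕ) (n : Clique I s →₀ ℤ) : qHom I X s (iotaHom I X s n) = 0 := by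
  suffices h : (qHom I X s).comp (iotaHom I X s) = 0 from DFunLike.congr_fun h n
  ext S
  simp

/-- `σ ∘ q + ι ∘ ε = id`. -/
lemma theta (s : ℕ) (x : AC I X s) :
    sigmaHom I X s (qHom I X s x) + iotaHom I X s (epsHom I X s x) = x := by
  suffices h : (sigmaHom I X s).comp (qHom I X s) + (iotaHom I X s).comp (epsHom I X s)
      = AddMonoidHom.id _ from DFunLike.congr_fun h x
  ext p
  obtain ⟨o, S⟩ := p
  cases o <;> simp [sigma_bGen]

/-- `ε ∘ d_A = 0`: `ε` is a chain map to the complex with zero differential. -/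
lemma eps_Ad (s : ℕ) (x : AC I X (s + 1)) : epsHom I X s (Ad I act s x) = 0 := by
  suffices h : (epsHom I X s).comp (Ad I act s) = 0 from DFunLike.congr_fun h x
  ext p
  simp only [AddMonoidHom.coe_comp, Function.comp_apply, Finsupp.singleAddHom_apply,
    AddMonoidHom.zero_apply, Ad_single, map_sum, map_zsmul, map_sub, epsHom_single]
  simp

/-- `d_A` vanishes on the base-point part. -/
lemma Ad_none (hstar : ∀ e, act none e = none) (s : ℕ) (S : Clique I (s + 1)) :
    Ad I act s (Finsupp.single ((none : Option X), S) 1) = 0 := by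
  rw [Ad_single]
  refine Finset.sum_eq_zero fun e _ => ?_
  simp [hstar]

/-- `d_A ∘ ι = 0`. -/
lemma Ad_iota (hstar : ∀ e, act none e = none) (s : ℕ) (n : Clique I (s + 1) →₀ ℤ) :
    Ad I act s (iotaHom I X (s + 1) n) = 0 := by
  suffices h : (Ad I act s).comp (iotaHom I X (s + 1)) = 0 from DFunLike.congr_fun h n
  refine Finsupp.addHom_ext' fun S => AddMonoidHom.ext_int ?_
  simp only [AddMonoidHom.comp_apply, Finsupp.singleAddHom_apply, AddMonoidHom.zero_apply,
    iotaHom_single]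
  exact Ad_none hstar s S

/-- `q ∘ d_A = d_B ∘ q`. -/
lemma q_Ad (hstar : ∀ e, act none e = none) (s : ℕ) (x : AC I X (s + 1)) :
    qHom I X s (Ad I act s x) = Bd I act s (qHom I X (s + 1) x) := by
  suffices h : (qHom I X s).comp (Ad I act s) = (Bd I act s).comp (qHom I X (s + 1)) from
    DFunLike.congr_fun h x
  refine Finsupp.addHom_ext' fun p => AddMonoidHom.ext_int ?_
  obtain ⟨o, S⟩ := p
  simp only [AddMonoidHom.comp_apply, Finsupp.singleAddHom_apply,
    Ad_single, map_sum, map_zsmul, map_sub, qHom_single, one_smul]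
  cases o with
  | none =>
    rw [bGen_none, map_zero]
    refine Finset.sum_eq_zero fun e _ => ?_
    simp [hstar]
  | some y =>
    rw [bGen_some, Bd_single]
    refine Finset.sum_congr rfl fun e _ => ?_
    simp

/-- `d_A ∘ σ = σ ∘ d_B`. -/
lemma Ad_sigma (hstar : ∀ e, act none e = none) (s : ℕ) (b : BC I X (s + 1)) :
    Ad I act s (sigmaHom I X (s + 1) b) = sigmaHom I X s (Bd I act s b) := by
  suffices h : (Ad I act s).comp (sigmaHom I X (s + 1))
      = (sigmaHom I X s).comp (Bd I act s) from DFunLike.congr_fun h b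
  refine Finsupp.addHom_ext' fun p => AddMonoidHom.ext_int ?_
  simp only [AddMonoidHom.comp_apply, Finsupp.singleAddHom_apply,
    sigmaHom_single, one_smul, map_sub, Ad_none hstar, sub_zero, Ad_single, Bd_single,
    map_sum, map_zsmul, sigma_bGen]
  refine Finset.sum_congr rfl fun e _ => ?_
  rw [sub_sub_sub_cancel_right]

end Split

/-- `(α →₀ ℤ) ≃+ ℤ^{Nat.card α}` for finite `α`. -/
noncomputable def finsuppFinIntEquiv (α : Type*) [Finite α] :
    (α →₀ ℤ) ≃+ (Fin (Nat.card α) → ℤ) :=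
  { Finsupp.equivFunOnFinite.trans (Equiv.arrowCongr (Finite.equivFin α) (Equiv.refl ℤ)) with
    map_add' := fun _ _ => rfl }



section Main

variable {E : Type*} [LinearOrder E] [Fintype E]
variable {I : E → E → Prop} {X : Type*} {act : Option X → E → Option X}

/-- The map `x ↦ ([q x], ε x)` from `s`-cycles of `A(X)` to `H_s(B(X)) × ℤ[cliques]`. -/
noncomputable def piHom (hstar : ∀ e, act none e = none) (t : ℕ) :
    (Ad I act t).ker →+
      homologyOf (Bd I act t) (Bd I act (t + 1)) × (Clique I (t + 1) →₀ ℤ) :=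
  ((QuotientAddGroup.mk' _).comp
    (AddMonoidHom.codRestrict ((qHom I X (t + 1)).comp (Ad I act t).ker.subtype)
      (Bd I act t).ker (fun x => by
        rw [AddMonoidHom.mem_ker]
        show Bd I act t (qHom I X (t + 1) x.1) = 0
        have hx : Ad I act t x.1 = 0 := AddMonoidHom.mem_ker.mp x.2
        rw [← q_Ad hstar, hx, map_zero]))).prod
    ((epsHom I X (t + 1)).comp (Ad I act t).ker.subtype)

lemma piHom_surjective (hstar : ∀ e, act none e = none)
    (hcomm : ∀ o e e', I e e' → act (act o e) e' = act (act o e') e) (t : ℕ) :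
    Function.Surjective (piHom (I := I) (X := X) (act := act) hstar t) := by
  rintro ⟨hb, n⟩
  obtain ⟨b, rfl⟩ := QuotientAddGroup.mk'_surjective _ hb
  have hb2 : Bd I act t b.1 = 0 := AddMonoidHom.mem_ker.mp b.2
  refine ⟨⟨sigmaHom I X (t + 1) b.1 + iotaHom I X (t + 1) n, ?_⟩, ?_⟩
  · rw [AddMonoidHom.mem_ker, map_add, Ad_sigma hstar, hb2, map_zero, zero_add,
      Ad_iota hstar]
  · have h1 : qHom I X (t + 1) (sigmaHom I X (t + 1) b.1 + iotaHom I X (t + 1) n) = b.1 := by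
      rw [map_add, q_sigma, q_iota, add_zero]
    have h2 : epsHom I X (t + 1) (sigmaHom I X (t + 1) b.1 + iotaHom I X (t + 1) n) = n := by
      rw [map_add, eps_sigma, eps_iota, zero_add]
    refine Prod.ext ?_ h2
    show QuotientAddGroup.mk' _ _ = QuotientAddGroup.mk' _ b
    exact congrArg _ (Subtype.ext h1)

lemma piHom_ker (hstar : ∀ e, act none e = none) (t : ℕ) :
    (piHom (I := I) (X := X) (act := act) hstar t).ker
      = (Ad I act (t + 1)).range.addSubgroupOf (Ad I act t).ker := by
  ext x
  rw [AddMonoidHom.mem_ker, AddSubgroup.mem_addSubgroupOf]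
  constructor
  · intro hx
    rw [Prod.ext_iff] at hx
    obtain ⟨h1, h2⟩ := hx
    have h1' := (QuotientAddGroup.eq_zero_iff _).mp h1
    rw [AddSubgroup.mem_addSubgroupOf] at h1'
    obtain ⟨w, hw⟩ := h1'
    refine ⟨sigmaHom I X (t + 2) w, ?_⟩
    have h2' : epsHom I X (t + 1) x.1 = 0 := h2
    calc Ad I act (t + 1) (sigmaHom I X (t + 2) w)
        = sigmaHom I X (t + 1) (Bd I act (t + 1) w) := Ad_sigma hstar _ w
      _ = sigmaHom I X (t + 1) (qHom I X (t + 1) x.1) := by rw [hw]; rfl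
      _ = x.1 := by
          have h3 := theta (t + 1) x.1
          rwa [h2', map_zero, add_zero] at h3
  · rintro ⟨y, hy⟩
    have h1 : qHom I X (t + 1) x.1 = Bd I act (t + 1) (qHom I X (t + 2) y) := by
      rw [← q_Ad hstar, hy]
    have h2 : epsHom I X (t + 1) x.1 = 0 := by rw [← hy, eps_Ad]
    refine Prod.ext ?_ h2
    show QuotientAddGroup.mk' _ _ = 0
    rw [QuotientAddGroup.mk'_apply, QuotientAddGroup.eq_zero_iff,
      AddSubgroup.mem_addSubgroupOf]
    exact ⟨qHom I X (t + 2) y, h1.symm⟩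

end Main


/-- For any finite pointed `M(E,I)`-set `X^•` and every
`s ≥ 1`, `H_s(A(X^•)) ≅ H_s(B(X^•)) ⊕ ℤ^{p_s}`, where `p_s` is the number of
`s`-cliques. -/
theorem stmt4 {E : Type*} [LinearOrder E] [Fintype E]
    (I : E → E → Prop) (hirr : ∀ e, ¬ I e e) (hsym : ∀ e e', I e e' → I e' e)
    (X : Type*) [Finite X]
    (act : Option X → E → Option X)
    (hstar : ∀ e, act none e = none)
    (hcomm : ∀ o e e', I e e' → act (act o e) e' = act (act o e') e) :
    ∀ s : ℕ, 1 ≤ s → Nonempty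
      (Hmlgy (AC I X) (Ad I act) s ≃+
        (Hmlgy (BC I X) (Bd I act) s) × (Fin (pClique I s) → ℤ)) := by
  intro s hs
  obtain ⟨t, rfl⟩ : ∃ t, s = t + 1 := ⟨s - 1, (Nat.succ_pred_eq_of_pos hs).symm⟩
  haveI : Finite (Clique I (t + 1)) := Subtype.finite
  refine ⟨?_⟩
  refine AddEquiv.trans ?_
    (AddEquiv.prodCongr (AddEquiv.refl (Hmlgy (BC I X) (Bd I act) (t + 1)))
      (finsuppFinIntEquiv (Clique I (t + 1))))
  exact (QuotientAddGroup.quotientAddEquivOfEq (piHom_ker hstar t).symm).trans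
    (QuotientAddGroup.quotientKerEquivOfSurjective _ (piHom_surjective hstar hcomm t))

end PCMHomology
end

section
/- Let E be a finite nonempty linearly ordered set, I an irreflexive symmetric relation on E, and X^• a finite pointed M(E,I)-set with full action satisfying the rooted-tree condition. Let x_ℓ ∈ X be a leaf, i.e. no element x″ ∈ X^• satisfies x″·e = x_ℓ for all e ∈ E, and let X′^• = (X ∖ {x_ℓ}) ⊔ {*} with the induced (well-defined) action. Then for every s ≥ 1 there is an isomorphism H_s(B(X^•)) ≅ H_s(B(X′^•)) ⊕ H_s(K(E,I)). -/
namespace PCMHomology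

section Generic
variable {C2 C1 C0 C2' C1' C0' : Type*}
  [AddCommGroup C2] [AddCommGroup C1] [AddCommGroup C0]
  [AddCommGroup C2'] [AddCommGroup C1'] [AddCommGroup C0']

/-- Homology is invariant under chain isomorphism. -/
noncomputable def homologyCongr (d1 : C1 →+ C0) (d2 : C2 →+ C1)
    (d1' : C1' →+ C0') (d2' : C2' →+ C1')
    (e2 : C2 ≃+ C2') (e1 : C1 ≃+ C1') (e0 : C0 ≃+ C0')
    (h1 : ∀ x, d1' (e1 x) = e0 (d1 x))
    (h2 : ∀ x, d2' (e2 x) = e1 (d2 x)) :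
    homologyOf d1 d2 ≃+ homologyOf d1' d2' := by
  have hker : ∀ x : d1.ker, e1 x.1 ∈ d1'.ker := by
    intro x
    have := x.2
    simp only [AddMonoidHom.mem_ker] at *
    rw [h1, this, map_zero]
  let μ : d1.ker →+ homologyOf d1' d2' :=
    (QuotientAddGroup.mk' _).comp
      { toFun := fun x => ⟨e1 x.1, hker x⟩
        map_zero' := by ext; simp
        map_add' := by intro a b; ext; simp }
  have hμ : ∀ x : d1.ker, μ x = QuotientAddGroup.mk ⟨e1 x.1, hker x⟩ := fun x => rfl
  have hsurj : Function.Surjective μ := by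
    intro q
    obtain ⟨⟨y, hy⟩, rfl⟩ := QuotientAddGroup.mk_surjective q
    have hx : e1.symm y ∈ d1.ker := by
      rw [AddMonoidHom.mem_ker]
      apply e0.injective
      rw [← h1, e1.apply_symm_apply, map_zero]
      exact hy
    refine ⟨⟨e1.symm y, hx⟩, ?_⟩
    rw [hμ]
    congr 1
    ext
    exact e1.apply_symm_apply y
  have hkerμ : (d2.range).addSubgroupOf d1.ker = μ.ker := by
    ext x
    rw [AddMonoidHom.mem_ker, hμ, QuotientAddGroup.eq_zero_iff]
    simp only [AddSubgroup.mem_addSubgroupOf, AddMonoidHom.mem_range]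
    constructor
    · rintro ⟨z, hz⟩
      exact ⟨e2 z, by rw [h2, hz]⟩
    · rintro ⟨w, hw⟩
      refine ⟨e2.symm w, e1.injective ?_⟩
      rw [← h2, e2.apply_symm_apply]
      exact hw
  exact (QuotientAddGroup.quotientAddEquivOfEq hkerμ).trans
    (QuotientAddGroup.quotientKerEquivOfSurjective μ hsurj)

/-- Homology of a product complex is the product of homologies. -/
noncomputable def homologyProd (d1 : C1 →+ C0) (d2 : C2 →+ C1)
    (d1' : C1' →+ C0') (d2' : C2' →+ C1') :
    homologyOf (d1.prodMap d1') (d2.prodMap d2') ≃+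
      homologyOf d1 d2 × homologyOf d1' d2' := by
  have hk1 : ∀ x : (d1.prodMap d1').ker, x.1.1 ∈ d1.ker := by
    rintro ⟨⟨a, b⟩, hx⟩
    rw [AddMonoidHom.mem_ker] at *
    exact congrArg Prod.fst hx
  have hk2 : ∀ x : (d1.prodMap d1').ker, x.1.2 ∈ d1'.ker := by
    rintro ⟨⟨a, b⟩, hx⟩
    rw [AddMonoidHom.mem_ker] at *
    exact congrArg Prod.snd hx
  let f1 : (d1.prodMap d1').ker →+ d1.ker :=
    { toFun := fun x => ⟨x.1.1, hk1 x⟩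
      map_zero' := Subtype.ext rfl
      map_add' := fun a b => Subtype.ext rfl }
  let f2 : (d1.prodMap d1').ker →+ d1'.ker :=
    { toFun := fun x => ⟨x.1.2, hk2 x⟩
      map_zero' := Subtype.ext rfl
      map_add' := fun a b => Subtype.ext rfl }
  let μ : (d1.prodMap d1').ker →+ homologyOf d1 d2 × homologyOf d1' d2' :=
    ((QuotientAddGroup.mk' _).comp f1).prod ((QuotientAddGroup.mk' _).comp f2)
  have hμ : ∀ x, μ x = (QuotientAddGroup.mk ⟨x.1.1, hk1 x⟩,
        QuotientAddGroup.mk ⟨x.1.2, hk2 x⟩) := fun _ => rfl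
  have hsurj : Function.Surjective μ := by
    rintro ⟨q, q'⟩
    obtain ⟨⟨y, hy⟩, rfl⟩ := QuotientAddGroup.mk_surjective q
    obtain ⟨⟨y', hy'⟩, rfl⟩ := QuotientAddGroup.mk_surjective q'
    refine ⟨⟨(y, y'), ?_⟩, rfl⟩
    rw [AddMonoidHom.mem_ker] at *
    exact Prod.ext hy hy'
  have hkerμ : ((d2.prodMap d2').range).addSubgroupOf (d1.prodMap d1').ker = μ.ker := by
    ext x
    rw [AddMonoidHom.mem_ker, hμ, Prod.mk_eq_zero, QuotientAddGroup.eq_zero_iff,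
      QuotientAddGroup.eq_zero_iff]
    simp only [AddSubgroup.mem_addSubgroupOf, AddMonoidHom.mem_range,
      AddSubgroup.mem_addSubgroupOf]
    constructor
    · rintro ⟨⟨z, z'⟩, hz⟩
      exact ⟨⟨z, congrArg Prod.fst hz⟩, ⟨z', congrArg Prod.snd hz⟩⟩
    · rintro ⟨⟨z, hz⟩, ⟨z', hz'⟩⟩
      exact ⟨(z, z'), Prod.ext hz hz'⟩
  exact (QuotientAddGroup.quotientAddEquivOfEq hkerμ).trans
    (QuotientAddGroup.quotientKerEquivOfSurjective μ hsurj)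

end Generic

variable {E : Type*} [LinearOrder E] [Fintype E]

/-- The "label-preserving" differential `id ⊗ Kd` on `BC`. -/
noncomputable def Dd (I : E → E → Prop) (X : Type*) (s : ℕ) :
    BC I X (s + 1) →+ BC I X s :=
  Finsupp.liftAddHom fun p => zmultiplesHom _
    (∑ e ∈ p.2.val.attach, ((-1 : ℤ) ^ posIdx p.2 e) •
      Finsupp.single (p.1, faceClique p.2 e) (1 : ℤ))

/-- The endomorphism of `BC` induced by a transition map `f` on `Option X`. -/
noncomputable def Tmap (I : E → E → Prop) {X : Type*} (f : Option X → Option X)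
    (s : ℕ) : AddMonoid.End (BC I X s) :=
  Finsupp.liftAddHom fun p => zmultiplesHom _ (bGen (f (some p.1)) p.2)

variable {I : E → E → Prop} {X : Type*}

lemma Tmap_single (f : Option X → Option X) {s : ℕ} (x : X) (S : Clique I s) :
    Tmap I f s (Finsupp.single (x, S) 1) = bGen (f (some x)) S := by
  show (Finsupp.liftAddHom fun p : X × Clique I s =>
    zmultiplesHom (BC I X s) (bGen (f (some p.1)) p.2)) (Finsupp.single (x, S) 1) = _
  rw [Finsupp.liftAddHom_apply_single]
  simp

lemma Tmap_bGen (f : Option X → Option X) (hf : f none = none) {s : ℕ}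
    (o : Option X) (S : Clique I s) :
    Tmap I f s (bGen o S) = bGen (f o) S := by
  cases o with
  | none => simp [bGen, hf]
  | some y => simpa [bGen] using Tmap_single f y S

lemma Tmap_pow (f : Option X → Option X) (hf : f none = none) {s : ℕ} (k : ℕ)
    (x : X) (S : Clique I s) :
    (Tmap I f s ^ k) (Finsupp.single (x, S) 1) = bGen (f^[k] (some x)) S := by
  induction k with
  | zero => simp [bGen]
  | succ n ih =>
    rw [pow_succ']
    show Tmap I f s ((Tmap I f s ^ n) _) = _
    rw [ih, Tmap_bGen f hf, Function.iterate_succ_apply']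

lemma Tmap_nilpotent (f : Option X → Option X) (hf : f none = none) {N : ℕ}
    (hN : ∀ x : X, f^[N] (some x) = none) (s : ℕ) :
    Tmap I f s ^ N = 0 := by
  apply Finsupp.addHom_ext
  intro p n
  have h1 : (Tmap I f s ^ N) (Finsupp.single p 1) = 0 := by
    obtain ⟨x, S⟩ := p
    rw [Tmap_pow f hf, hN]
    rfl
  have : Finsupp.single p n = n • Finsupp.single p (1 : ℤ) := by
    rw [Finsupp.smul_single, smul_eq_mul, mul_one]
  have h2 : (Tmap I f s ^ N) (Finsupp.single p n) = 0 := by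
    rw [this, map_zsmul, h1, smul_zero]
  exact h2

/-- `Bd = Dd ∘ (1 - T)` for a full action. -/
lemma Bd_eq_Dd_comp (act : Option X → E → Option X) (e0 : E)
    (hfull : ∀ o e, act o e = act o e0) (s : ℕ) :
    Bd I act s = (Dd I X s).comp
      ((1 : AddMonoid.End (BC I X (s+1))) - Tmap I (fun o => act o e0) (s+1)) := by
  apply Finsupp.addHom_ext
  intro p n
  have key : Bd I act s (Finsupp.single p 1) =
      Dd I X s (Finsupp.single p 1 - Tmap I (fun o => act o e0) (s+1) (Finsupp.single p 1)) := by
    obtain ⟨x, S⟩ := p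
    rw [Tmap_single, map_sub]
    have hD : ∀ (o : Option X), Dd I X s (bGen o S) =
        ∑ e ∈ S.val.attach, ((-1 : ℤ) ^ posIdx S e) • bGen o (faceClique S e) := by
      intro o
      cases o with
      | none => simp [bGen]
      | some y => simp [bGen, Dd]
    rw [hD]
    have hB : Bd I act s (Finsupp.single (x, S) 1) =
        ∑ e ∈ S.val.attach, ((-1 : ℤ) ^ (posIdx S e + 1)) •
          (bGen (act (some x) e.val) (faceClique S e)
            - Finsupp.single (x, faceClique S e) (1 : ℤ)) := by
      simp [Bd]
    have hDx : Dd I X s (Finsupp.single (x, S) 1) =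
        ∑ e ∈ S.val.attach, ((-1 : ℤ) ^ posIdx S e) •
          Finsupp.single (x, faceClique S e) (1 : ℤ) := by
      simp [Dd]
    rw [hB, hDx, ← Finset.sum_sub_distrib]
    apply Finset.sum_congr rfl
    intro e _
    rw [hfull (some x) e.val]
    have h : ((-1 : ℤ) ^ (posIdx S e + 1)) = -((-1 : ℤ) ^ posIdx S e) := by ring
    rw [h, neg_smul, smul_sub]
    abel
  have : Finsupp.single p n = n • Finsupp.single p (1 : ℤ) := by
    rw [Finsupp.smul_single, smul_eq_mul, mul_one]
  rw [this, map_zsmul, map_zsmul, key]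
  rfl

/-- `T` commutes with `D` across degrees. -/
lemma Tmap_comm_Dd (f : Option X → Option X) (hf : f none = none) (s : ℕ) :
    ((Tmap I f s : AddMonoid.End (BC I X s)) : BC I X s →+ BC I X s).comp (Dd I X s)
      = (Dd I X s).comp (Tmap I f (s+1) : BC I X (s+1) →+ BC I X (s+1)) := by
  apply Finsupp.addHom_ext
  intro p n
  obtain ⟨x, S⟩ := p
  have key : Tmap I f s (Dd I X s (Finsupp.single (x, S) 1)) =
      Dd I X s (Tmap I f (s+1) (Finsupp.single (x, S) 1)) := by
    have hDx : Dd I X s (Finsupp.single (x, S) 1) =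
        ∑ e ∈ S.val.attach, ((-1 : ℤ) ^ posIdx S e) •
          Finsupp.single (x, faceClique S e) (1 : ℤ) := by
      simp [Dd]
    have hD : ∀ (o : Option X), Dd I X s (bGen o S) =
        ∑ e ∈ S.val.attach, ((-1 : ℤ) ^ posIdx S e) • bGen o (faceClique S e) := by
      intro o
      cases o with
      | none => simp [bGen]
      | some y => simp [bGen, Dd]
    rw [hDx, Tmap_single, hD, map_sum]
    apply Finset.sum_congr rfl
    intro e _
    rw [map_zsmul]
    congr 1
    simpa [bGen] using Tmap_single f x (faceClique S e)
  have hn : Finsupp.single (x, S) n = n • Finsupp.single (x, S) (1 : ℤ) := by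
    rw [Finsupp.smul_single, smul_eq_mul, mul_one]
  show Tmap I f s (Dd I X s (Finsupp.single (x, S) n))
    = Dd I X s (Tmap I f (s+1) (Finsupp.single (x, S) n))
  rw [hn, map_zsmul, map_zsmul, map_zsmul, map_zsmul, key]

section Machinery

variable {E : Type*} [LinearOrder E] [Fintype E] {I : E → E → Prop} {X : Type*}

lemma End_mul_apply {M : Type*} [AddCommMonoid M] (a b : AddMonoid.End M) (x : M) :
    (a * b) x = a (b x) := rfl

lemma End_sum_apply {M : Type*} [AddCommMonoid M] {ι : Type*} (s : Finset ι)
    (a : ι → AddMonoid.End M) (x : M) : (∑ j ∈ s, a j) x = ∑ j ∈ s, a j x := by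
  induction s using Finset.cons_induction with
  | empty => rfl
  | cons i s hi ih => rw [Finset.sum_cons, Finset.sum_cons, ← ih]; rfl

variable (I) in
/-- Geometric series `∑_{j<N} T^j`, the inverse of `1 - T`. -/
noncomputable def sigmaE (f : Option X → Option X) (N s : ℕ) :
    AddMonoid.End (BC I X s) := ∑ j ∈ Finset.range N, Tmap I f s ^ j

variable (I) in
noncomputable def phiE (f : Option X → Option X) (s : ℕ) :
    AddMonoid.End (BC I X s) := 1 - Tmap I f s

lemma commute_phi_sigma (f : Option X → Option X) (N s : ℕ) :
    Commute (phiE I f s) (sigmaE I f N s) := by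
  have hTσ : Commute (Tmap I f s) (sigmaE I f N s) := by
    refine Commute.sum_right _ _ _ fun i _ => (Commute.refl _).pow_right i
  exact (Commute.one_left _).sub_left hTσ

lemma sigma_mul_phi (f : Option X → Option X) (hf : f none = none) {N : ℕ}
    (hN : ∀ x : X, f^[N] (some x) = none) (s : ℕ) :
    sigmaE I f N s * phiE I f s = 1 := by
  have h := geom_sum_mul (Tmap I f s) N
  rw [Tmap_nilpotent f hf hN s] at h
  have h2 : sigmaE I f N s * phiE I f s = -(sigmaE I f N s * (Tmap I f s - 1)) := by
    unfold sigmaE phiE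
    rw [show (1 : AddMonoid.End (BC I X s)) - Tmap I f s = -(Tmap I f s - 1)
      from (neg_sub (Tmap I f s) 1).symm]
    exact mul_neg (∑ j ∈ Finset.range N, Tmap I f s ^ j) (Tmap I f s - 1)
  rw [h2]
  show -((∑ i ∈ Finset.range N, Tmap I f s ^ i) * (Tmap I f s - 1)) = 1
  rw [h]
  simp

lemma phi_mul_sigma (f : Option X → Option X) (hf : f none = none) {N : ℕ}
    (hN : ∀ x : X, f^[N] (some x) = none) (s : ℕ) :
    phiE I f s * sigmaE I f N s = 1 := by
  rw [(commute_phi_sigma f N s).eq, sigma_mul_phi f hf hN s]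

lemma phi_pow_mul_sigma_pow (f : Option X → Option X) (hf : f none = none) {N : ℕ}
    (hN : ∀ x : X, f^[N] (some x) = none) (s : ℕ) :
    phiE I f s ^ s * sigmaE I f N s ^ s = 1 := by
  have h := (commute_phi_sigma (I := I) f N s).mul_pow s
  rw [phi_mul_sigma f hf hN s, one_pow] at h
  exact h.symm

lemma sigma_pow_mul_phi_pow (f : Option X → Option X) (hf : f none = none) {N : ℕ}
    (hN : ∀ x : X, f^[N] (some x) = none) (s : ℕ) :
    sigmaE I f N s ^ s * phiE I f s ^ s = 1 := by
  have h := (commute_phi_sigma (I := I) f N s).symm.mul_pow s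
  rw [sigma_mul_phi f hf hN s, one_pow] at h
  exact h.symm

/-- The chain isomorphism `ψ_s = σ^s` (with inverse `φ^s`). -/
noncomputable def psiE (f : Option X → Option X) (hf : f none = none) {N : ℕ}
    (hN : ∀ x : X, f^[N] (some x) = none) (s : ℕ) : BC I X s ≃+ BC I X s :=
  AddMonoidHom.toAddEquiv (sigmaE I f N s ^ s) (phiE I f s ^ s)
    (phi_pow_mul_sigma_pow f hf hN s) (sigma_pow_mul_phi_pow f hf hN s)

lemma psiE_apply (f : Option X → Option X) (hf : f none = none) {N : ℕ}
    (hN : ∀ x : X, f^[N] (some x) = none) (s : ℕ) (z : BC I X s) :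
    psiE (I := I) f hf hN s z = (sigmaE I f N s ^ s) z := rfl

lemma Tmap_pow_comm_Dd (f : Option X → Option X) (hf : f none = none) (s k : ℕ)
    (z : BC I X (s + 1)) :
    (Tmap I f s ^ k) (Dd I X s z) = Dd I X s ((Tmap I f (s+1) ^ k) z) := by
  induction k generalizing z with
  | zero => rfl
  | succ n ih =>
    have base : ∀ w : BC I X (s+1), Tmap I f s (Dd I X s w) = Dd I X s (Tmap I f (s+1) w) :=
      fun w => DFunLike.congr_fun (Tmap_comm_Dd f hf s) w
    rw [pow_succ', pow_succ', End_mul_apply, End_mul_apply, ih, base]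

lemma sigma_pow_comm_Dd (f : Option X → Option X) (hf : f none = none) (N s k : ℕ)
    (z : BC I X (s + 1)) :
    (sigmaE I f N s ^ k) (Dd I X s z) = Dd I X s ((sigmaE I f N (s+1) ^ k) z) := by
  induction k generalizing z with
  | zero => rfl
  | succ n ih =>
    have base : ∀ w : BC I X (s+1),
        sigmaE I f N s (Dd I X s w) = Dd I X s (sigmaE I f N (s+1) w) := by
      intro w
      show (∑ j ∈ Finset.range N, Tmap I f s ^ j) (Dd I X s w)
        = Dd I X s ((∑ j ∈ Finset.range N, Tmap I f (s+1) ^ j) w)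
      rw [End_sum_apply, End_sum_apply, map_sum]
      exact Finset.sum_congr rfl fun j _ => Tmap_pow_comm_Dd f hf s j w
    rw [pow_succ', pow_succ', End_mul_apply, End_mul_apply, ih, base]

/-- The main chain square: `Bd ∘ ψ_{s+1} = ψ_s ∘ Dd`. -/
lemma Bd_psi_square (act : Option X → E → Option X) (e0 : E)
    (hfull : ∀ o e, act o e = act o e0)
    (hf : act none e0 = none) {N : ℕ}
    (hN : ∀ x : X, (fun o => act o e0)^[N] (some x) = none) (s : ℕ)
    (z : BC I X (s + 1)) :
    Bd I act s (psiE (I := I) (fun o => act o e0) hf hN (s+1) z)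
      = psiE (I := I) (fun o => act o e0) hf hN s (Dd I X s z) := by
  have hBd : ∀ w : BC I X (s+1),
      Bd I act s w = Dd I X s (phiE I (fun o => act o e0) (s+1) w) :=
    fun w => DFunLike.congr_fun (Bd_eq_Dd_comp act e0 hfull s) w
  rw [psiE_apply, psiE_apply, hBd]
  have h1 : phiE I (fun o => act o e0) (s+1)
        ((sigmaE I (fun o => act o e0) N (s+1) ^ (s+1)) z)
      = (sigmaE I (fun o => act o e0) N (s+1) ^ s) z := by
    rw [← End_mul_apply]
    congr 1
    rw [pow_succ', ← mul_assoc, phi_mul_sigma _ hf hN (s+1), one_mul]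
  rw [h1, ← sigma_pow_comm_Dd _ hf N s s z]

end Machinery

section Split

variable {E : Type*} [LinearOrder E] [Fintype E] {I : E → E → Prop} {X : Type*}

variable (I) in
open Classical in
noncomputable def Fsplit (xl : X) (s : ℕ) :
    BC I X s →+ (BC I {y : X // y ≠ xl} s × KC I s) :=
  Finsupp.liftAddHom fun p => zmultiplesHom _
    (if h : p.1 = xl then (0, Finsupp.single p.2 1)
     else (Finsupp.single (⟨p.1, h⟩, p.2) 1, 0))

variable (I) in
noncomputable def G1split (xl : X) (s : ℕ) :
    BC I {y : X // y ≠ xl} s →+ BC I X s :=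
  Finsupp.liftAddHom fun p => zmultiplesHom _ (Finsupp.single (p.1.val, p.2) 1)

variable (I) in
noncomputable def G2split (xl : X) (s : ℕ) : KC I s →+ BC I X s :=
  Finsupp.liftAddHom fun S => zmultiplesHom _ (Finsupp.single (xl, S) 1)

variable (I) in
noncomputable def Gsplit (xl : X) (s : ℕ) :
    (BC I {y : X // y ≠ xl} s × KC I s) →+ BC I X s :=
  (G1split I xl s).coprod (G2split I xl s)

open Classical in
lemma Fsplit_single (xl : X) (s : ℕ) (x : X) (S : Clique I s) :
    Fsplit I xl s (Finsupp.single (x, S) 1)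
      = (if h : x = xl then (0, Finsupp.single S 1)
         else (Finsupp.single (⟨x, h⟩, S) 1, 0)) := by
  simp [Fsplit, Finsupp.liftAddHom_apply_single]

lemma Gsplit_comp_Fsplit (xl : X) (s : ℕ) :
    (Gsplit I xl s).comp (Fsplit I xl s) = AddMonoidHom.id (BC I X s) := by
  apply Finsupp.addHom_ext
  rintro ⟨x, S⟩ n
  have key : Gsplit I xl s (Fsplit I xl s (Finsupp.single (x, S) 1))
      = Finsupp.single (x, S) (1 : ℤ) := by
    rw [Fsplit_single]
    by_cases h : x = xl
    · subst h
      simp [Gsplit, G1split, G2split, AddMonoidHom.coprod_apply,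
        Finsupp.liftAddHom_apply_single]
    · simp [h, Gsplit, G1split, G2split, AddMonoidHom.coprod_apply,
        Finsupp.liftAddHom_apply_single]
  have hn : Finsupp.single (x, S) n = n • Finsupp.single (x, S) (1 : ℤ) := by
    rw [Finsupp.smul_single, smul_eq_mul, mul_one]
  simp only [AddMonoidHom.comp_apply, AddMonoidHom.id_apply]
  rw [hn, map_zsmul, map_zsmul, key]

lemma Fsplit_comp_G1split (xl : X) (s : ℕ) :
    (Fsplit I xl s).comp (G1split I xl s)
      = AddMonoidHom.inl (BC I {y : X // y ≠ xl} s) (KC I s) := by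
  apply Finsupp.addHom_ext
  rintro ⟨⟨y, hy⟩, S⟩ n
  have key : Fsplit I xl s (G1split I xl s (Finsupp.single (⟨y, hy⟩, S) 1))
      = (Finsupp.single ((⟨y, hy⟩ : {y : X // y ≠ xl}), S) 1, (0 : KC I s)) := by
    simp [G1split, Finsupp.liftAddHom_apply_single, Fsplit_single, hy]
  have hn : Finsupp.single ((⟨y, hy⟩ : {y : X // y ≠ xl}), S) n
      = n • Finsupp.single ((⟨y, hy⟩ : {y : X // y ≠ xl}), S) (1 : ℤ) := by
    rw [Finsupp.smul_single, smul_eq_mul, mul_one]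
  simp only [AddMonoidHom.comp_apply, AddMonoidHom.inl_apply]
  rw [hn, map_zsmul, map_zsmul, key, Prod.smul_mk, smul_zero]

lemma Fsplit_comp_G2split (xl : X) (s : ℕ) :
    (Fsplit I xl s).comp (G2split I xl s)
      = AddMonoidHom.inr (BC I {y : X // y ≠ xl} s) (KC I s) := by
  apply Finsupp.addHom_ext
  rintro S n
  have key : Fsplit I xl s (G2split I xl s (Finsupp.single S 1))
      = ((0 : BC I {y : X // y ≠ xl} s), Finsupp.single S 1) := by
    simp [G2split, Finsupp.liftAddHom_apply_single, Fsplit_single]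
  have hn : Finsupp.single S n = n • Finsupp.single S (1 : ℤ) := by
    rw [Finsupp.smul_single, smul_eq_mul, mul_one]
  simp only [AddMonoidHom.comp_apply, AddMonoidHom.inr_apply]
  rw [hn, map_zsmul, map_zsmul, key, Prod.smul_mk, smul_zero]

lemma Fsplit_comp_Gsplit (xl : X) (s : ℕ) :
    (Fsplit I xl s).comp (Gsplit I xl s) = AddMonoidHom.id _ := by
  unfold Gsplit
  rw [AddMonoidHom.comp_coprod, Fsplit_comp_G1split, Fsplit_comp_G2split,
    AddMonoidHom.coprod_inl_inr]

variable (I) in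
noncomputable def rhoE (xl : X) (s : ℕ) :
    BC I X s ≃+ (BC I {y : X // y ≠ xl} s × KC I s) :=
  AddMonoidHom.toAddEquiv (Fsplit I xl s) (Gsplit I xl s)
    (Gsplit_comp_Fsplit xl s) (Fsplit_comp_Gsplit xl s)

lemma rhoE_apply (xl : X) (s : ℕ) (z : BC I X s) :
    rhoE I xl s z = Fsplit I xl s z := rfl


lemma rho_square {E : Type*} [LinearOrder E] [Fintype E] {I : E → E → Prop} {X : Type*}
    (xl : X) (s : ℕ) (z : BC I X (s + 1)) :
    ((Dd I {y : X // y ≠ xl} s).prodMap (Kd I s)) (rhoE I xl (s+1) z)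
      = rhoE I xl s (Dd I X s z) := by
  have main : ((Dd I {y : X // y ≠ xl} s).prodMap (Kd I s)).comp (Fsplit I xl (s+1))
      = (Fsplit I xl s).comp (Dd I X s) := by
    apply Finsupp.addHom_ext
    rintro ⟨x, S⟩ n
    have key : ((Dd I {y : X // y ≠ xl} s).prodMap (Kd I s))
          (Fsplit I xl (s+1) (Finsupp.single (x, S) 1))
        = Fsplit I xl s (Dd I X s (Finsupp.single (x, S) 1)) := by
      classical
      rw [Fsplit_single]
      have hDx : Dd I X s (Finsupp.single (x, S) 1) =
          ∑ e ∈ S.val.attach, ((-1 : ℤ) ^ posIdx S e) •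
            Finsupp.single (x, faceClique S e) (1 : ℤ) := by
        simp [Dd, Finsupp.liftAddHom_apply_single]
      rw [hDx, map_sum]
      by_cases h : x = xl
      · subst h
        rw [dif_pos rfl]
        have hK : Kd I s (Finsupp.single S 1) =
            ∑ e ∈ S.val.attach, ((-1 : ℤ) ^ posIdx S e) •
              Finsupp.single (faceClique S e) (1 : ℤ) := by
          simp [Kd, Finsupp.liftAddHom_apply_single]
        simp only [AddMonoidHom.coe_prodMap, Prod.map_apply', map_zero]
        rw [hK]
        rw [show (0 : BC I {y : X // y ≠ x} s)
            = ∑ _e ∈ S.val.attach, (0 : BC I {y : X // y ≠ x} s)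
          from Finset.sum_const_zero.symm, prod_mk_sum]
        refine Finset.sum_congr rfl fun e _ => ?_
        rw [map_zsmul, Fsplit_single, dif_pos rfl]
        simp [Prod.smul_mk]
      · rw [dif_neg h]
        have hD' : Dd I {y : X // y ≠ xl} s
              (Finsupp.single ((⟨x, h⟩ : {y : X // y ≠ xl}), S) 1) =
            ∑ e ∈ S.val.attach, ((-1 : ℤ) ^ posIdx S e) •
              Finsupp.single ((⟨x, h⟩ : {y : X // y ≠ xl}), faceClique S e) (1 : ℤ) := by
          simp [Dd, Finsupp.liftAddHom_apply_single]
        simp only [AddMonoidHom.coe_prodMap, Prod.map_apply', map_zero]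
        rw [hD']
        rw [show (0 : KC I s) = ∑ _e ∈ S.val.attach, (0 : KC I s)
          from Finset.sum_const_zero.symm, prod_mk_sum]
        refine Finset.sum_congr rfl fun e _ => ?_
        rw [map_zsmul, Fsplit_single, dif_neg h]
        simp [Prod.smul_mk]
    have hn : Finsupp.single (x, S) n = n • Finsupp.single (x, S) (1 : ℤ) := by
      rw [Finsupp.smul_single, smul_eq_mul, mul_one]
    simp only [AddMonoidHom.comp_apply]
    rw [hn, map_zsmul, map_zsmul, map_zsmul, map_zsmul, key]
  exact DFunLike.congr_fun main z

end Split


end PCMHomology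


namespace PCMHomology

/-- Let `X^•` be a finite pointed `M(E,I)`-set with full
action satisfying the rooted-tree condition, let `xl ∈ X` be a leaf (no
`x'' ∈ X^•` satisfies `x''·e = xl` for all `e`), and let `X'^•` be
`(X ∖ {xl}) ⊔ {*}` with the induced action `act'` (characterized by
compatibility with `act` under the inclusion). Then for every `s ≥ 1`,
`H_s(B(X^•)) ≅ H_s(B(X'^•)) ⊕ H_s(K(E,I))`. -/
theorem stmt6 {E : Type*} [LinearOrder E] [Fintype E] [Nonempty E]
    (I : E → E → Prop) (hirr : ∀ e, ¬ I e e) (hsym : ∀ e e', I e e' → I e' e)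
    (X : Type*) [Finite X]
    (act : Option X → E → Option X)
    (hstar : ∀ e, act none e = none)
    (hcomm : ∀ o e e', I e e' → act (act o e) e' = act (act o e') e)
    (hfull : ∀ o e e', act o e = act o e')
    (e0 : E)
    (htree : ∀ x : X, ∃ k : ℕ, (fun o => act o e0)^[k] (some x) = none)
    (xl : X)
    (hleaf : ¬ ∃ x'' : Option X, ∀ e : E, act x'' e = some xl)
    (act' : Option {y : X // y ≠ xl} → E → Option {y : X // y ≠ xl})
    (hact' : ∀ (o : Option {y : X // y ≠ xl}) (e : E),
      Option.map Subtype.val (act' o e) = act (Option.map Subtype.val o) e) :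
    ∀ s : ℕ, 1 ≤ s → Nonempty
      (Hmlgy (BC I X) (Bd I act) s ≃+
        (Hmlgy (BC I {y : X // y ≠ xl}) (Bd I act') s)
          × (Hmlgy (KC I) (Kd I) s)) := by
  classical
  have hf0 : (fun (o : Option X) => act o e0) none = none := hstar e0
  have hinj : Function.Injective
      (Option.map (Subtype.val : {y : X // y ≠ xl} → X)) :=
    Option.map_injective Subtype.val_injective
  have hmap : ∀ o, Option.map Subtype.val ((fun o => act' o e0) o)
      = (fun o => act o e0) (Option.map Subtype.val o) := fun o => hact' o e0
  have hf0' : (fun (o : Option {y : X // y ≠ xl}) => act' o e0) none = none := by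
    apply hinj
    rw [hmap]
    exact hf0
  have hEx : ∃ N : ℕ, ∀ x : X, (fun o => act o e0)^[N] (some x) = none := by
    cases isEmpty_or_nonempty X with
    | inl hempty => exact ⟨0, fun x => (hempty.false x).elim⟩
    | inr hne =>
      haveI := Fintype.ofFinite X
      choose k hk using htree
      refine ⟨Finset.univ.sup k, fun x => ?_⟩
      have hle : k x ≤ Finset.univ.sup k := Finset.le_sup (Finset.mem_univ x)
      obtain ⟨m, hm⟩ := Nat.exists_eq_add_of_le hle
      rw [hm, add_comm, Function.iterate_add_apply, hk x]
      exact Function.iterate_fixed hf0 m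
  obtain ⟨N, hN⟩ := hEx
  have hiter : ∀ (k : ℕ) (o : Option {y : X // y ≠ xl}),
      Option.map Subtype.val ((fun o => act' o e0)^[k] o)
        = (fun o => act o e0)^[k] (Option.map Subtype.val o) := by
    intro k
    induction k with
    | zero => intro o; rfl
    | succ m ih =>
      intro o
      rw [Function.iterate_succ_apply', Function.iterate_succ_apply', hmap, ih]
  have hN' : ∀ y : {y : X // y ≠ xl},
      (fun o => act' o e0)^[N] (some y) = none := by
    intro y
    apply hinj
    rw [hiter]
    exact hN y.val
  have hfull2 : ∀ o e, act o e = act o e0 := fun o e => hfull o e e0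
  have hfull2' : ∀ o e, act' o e = act' o e0 := by
    intro o e
    apply hinj
    rw [hact', hact']
    exact hfull (Option.map Subtype.val o) e e0
  rintro (_ | t) hs
  · omega
  refine ⟨?_⟩
  show homologyOf (Bd I act t) (Bd I act (t+1)) ≃+
    (homologyOf (Bd I act' t) (Bd I act' (t+1))) × homologyOf (Kd I t) (Kd I (t+1))
  let eqv1 : homologyOf (Dd I X t) (Dd I X (t+1)) ≃+
      homologyOf (Bd I act t) (Bd I act (t+1)) :=
    homologyCongr (Dd I X t) (Dd I X (t+1)) (Bd I act t) (Bd I act (t+1))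
      (psiE (I := I) (fun o => act o e0) hf0 hN (t+2))
      (psiE (I := I) (fun o => act o e0) hf0 hN (t+1))
      (psiE (I := I) (fun o => act o e0) hf0 hN t)
      (Bd_psi_square act e0 hfull2 hf0 hN t)
      (Bd_psi_square act e0 hfull2 hf0 hN (t+1))
  let eqv2 : homologyOf (Dd I X t) (Dd I X (t+1)) ≃+
      homologyOf ((Dd I {y : X // y ≠ xl} t).prodMap (Kd I t))
        ((Dd I {y : X // y ≠ xl} (t+1)).prodMap (Kd I (t+1))) :=
    homologyCongr (Dd I X t) (Dd I X (t+1))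
      ((Dd I {y : X // y ≠ xl} t).prodMap (Kd I t))
      ((Dd I {y : X // y ≠ xl} (t+1)).prodMap (Kd I (t+1)))
      (rhoE I xl (t+2)) (rhoE I xl (t+1)) (rhoE I xl t)
      (rho_square xl t) (rho_square xl (t+1))
  let eqv3 := homologyProd (Dd I {y : X // y ≠ xl} t) (Dd I {y : X // y ≠ xl} (t+1))
    (Kd I t) (Kd I (t+1))
  let eqv4 : homologyOf (Dd I {y : X // y ≠ xl} t) (Dd I {y : X // y ≠ xl} (t+1)) ≃+
      homologyOf (Bd I act' t) (Bd I act' (t+1)) :=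
    homologyCongr (Dd I {y : X // y ≠ xl} t) (Dd I {y : X // y ≠ xl} (t+1))
      (Bd I act' t) (Bd I act' (t+1))
      (psiE (I := I) (fun o => act' o e0) hf0' hN' (t+2))
      (psiE (I := I) (fun o => act' o e0) hf0' hN' (t+1))
      (psiE (I := I) (fun o => act' o e0) hf0' hN' t)
      (Bd_psi_square act' e0 hfull2' hf0' hN' t)
      (Bd_psi_square act' e0 hfull2' hf0' hN' (t+1))
  exact (eqv1.symm.trans eqv2).trans (eqv3.trans (AddEquiv.prodCongr eqv4 (AddEquiv.refl _)))

end PCMHomology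
end

section
/- (Negative answer to the motivating question.) For every finite nonempty linearly ordered set E and every irreflexive symmetric relation I on E, there exist two finite pointed M(E,I)-sets X^• and Y^• that are not isomorphic as pointed M(E,I)-sets (there is no base-point-preserving bijection φ : X^• → Y^• with φ(x·e) = φ(x)·e for all x and all e ∈ E), yet H_s(A(X^•)) ≅ H_s(A(Y^•)) for every s ≥ 0. Hence isomorphism of all homology groups of pointed M(E,I)-sets does not imply isomorphism of the M(E,I)-sets themselves. -/
namespace PCMHomology


section Aux

/-- Transport of `homologyOf` along a commuting ladder of isomorphisms. -/
noncomputable def homologyOfCongrAux {C2 C1 C0 C2' C1' C0' : Type*} [AddCommGroup C2]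
    [AddCommGroup C1] [AddCommGroup C0] [AddCommGroup C2'] [AddCommGroup C1']
    [AddCommGroup C0']
    (d1 : C1 →+ C0) (d2 : C2 →+ C1) (d1' : C1' →+ C0') (d2' : C2' →+ C1')
    (e2 : C2 ≃+ C2') (e1 : C1 ≃+ C1') (e0 : C0 ≃+ C0')
    (h1 : ∀ x, e0 (d1 x) = d1' (e1 x)) (h2 : ∀ x, e1 (d2 x) = d2' (e2 x)) :
    homologyOf d1 d2 ≃+ homologyOf d1' d2' := by
  have hker : d1.ker.map e1.toAddMonoidHom = d1'.ker := by
    ext y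
    simp only [AddSubgroup.mem_map, AddMonoidHom.mem_ker]
    constructor
    · rintro ⟨x, hx, rfl⟩
      have := h1 x
      rw [hx, map_zero] at this
      exact this.symm
    · intro hy
      refine ⟨e1.symm y, ?_, e1.apply_symm_apply y⟩
      have := h1 (e1.symm y)
      rw [e1.apply_symm_apply, hy] at this
      exact e0.injective (by rw [this, map_zero])
  let e' : d1.ker ≃+ d1'.ker :=
    (e1.addSubgroupMap d1.ker).trans (AddEquiv.addSubgroupCongr hker)
  refine QuotientAddGroup.congr _ _ e' ?_
  ext ⟨y, hy⟩
  simp only [AddSubgroup.mem_map, AddSubgroup.mem_addSubgroupOf, AddMonoidHom.mem_range]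
  constructor
  · rintro ⟨x, ⟨z, hz⟩, hx⟩
    have hval : e1 x.val = y := congrArg Subtype.val hx
    refine ⟨e2 z, ?_⟩
    rw [← h2 z, hz, hval]
  · rintro ⟨w, hw⟩
    have hxker : d2 (e2.symm w) ∈ d1.ker := by
      rw [AddMonoidHom.mem_ker]
      apply e0.injective
      rw [map_zero, h1, h2, e2.apply_symm_apply, hw]
      exact hy
    refine ⟨⟨d2 (e2.symm w), hxker⟩, ⟨e2.symm w, rfl⟩, ?_⟩
    apply Subtype.ext
    show e1 (d2 (e2.symm w)) = y
    rw [h2, e2.apply_symm_apply, hw]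

variable {E : Type*} [LinearOrder E] [Fintype E]

/-- The chain isomorphism `A(X^•) ≅ A(Y^•)` induced by a bijection of the
underlying pointed sets (not necessarily preserving the base point). -/
noncomputable def chainEquiv (I : E → E → Prop) {X Y : Type*} (ψ : Option X ≃ Option Y)
    (s : ℕ) : AC I X s ≃+ AC I Y s :=
  Finsupp.domCongr (Equiv.prodCongr ψ (Equiv.refl (Clique I s)))

theorem chainEquiv_comm (I : E → E → Prop) {X Y : Type*}
    (f : Option X → Option X) (g : Option Y → Option Y) (ψ : Option X ≃ Option Y)
    (hψ : ∀ o, ψ (f o) = g (ψ o)) (s : ℕ) :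
    (chainEquiv I ψ s).toAddMonoidHom.comp (Ad I (fun o _ => f o) s)
      = (Ad I (fun o _ => g o) s).comp (chainEquiv I ψ (s + 1)).toAddMonoidHom := by
  apply Finsupp.addHom_ext
  intro p n
  simp only [AddMonoidHom.comp_apply, AddEquiv.coe_toAddMonoidHom, chainEquiv,
    Finsupp.domCongr_apply, Finsupp.equivMapDomain_single, Ad,
    Finsupp.liftAddHom_apply_single, zmultiplesHom_apply]
  rw [← Finsupp.domCongr_apply]
  rw [map_zsmul, map_sum]
  simp only [map_zsmul, map_sub, Finsupp.domCongr_apply, Finsupp.equivMapDomain_single,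
    Equiv.prodCongr_apply, Equiv.coe_refl, Prod.map_apply, id_eq, hψ]
  rfl

theorem chainEquiv_comm' (I : E → E → Prop) {X Y : Type*}
    (f : Option X → Option X) (g : Option Y → Option Y) (ψ : Option X ≃ Option Y)
    (hψ : ∀ o, ψ (f o) = g (ψ o)) (s : ℕ) (x : AC I X (s + 1)) :
    (chainEquiv I ψ s) (Ad I (fun o _ => f o) s x)
      = Ad I (fun o _ => g o) s ((chainEquiv I ψ (s + 1)) x) :=
  DFunLike.congr_fun (chainEquiv_comm I f g ψ hψ s) x

/-- The endomorphism of `{*, a, b}` fixing `*` and `b`, sending `a` to `*`. -/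
def fX : Option Bool → Option Bool
  | none => none
  | some false => none
  | some true => some true

/-- The endomorphism of `{*, a, b}` fixing `*` and `b`, sending `a` to `b`. -/
def gY : Option Bool → Option Bool
  | none => none
  | some false => some true
  | some true => some true

/-- The (non-pointed) bijection conjugating `fX` to `gY`. -/
def psiXY : Option Bool ≃ Option Bool where
  toFun o := match o with
    | none => some true
    | some false => some false
    | some true => none
  invFun o := match o with
    | none => some true
    | some false => some false
    | some true => none
  left_inv := by decide
  right_inv := by decide

theorem psi_conj : ∀ o, psiXY (fX o) = gY (psiXY o) := by decide

end Aux

/-- **negative answer to the motivating question.** For every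
finite nonempty linearly ordered `E` and every irreflexive symmetric relation
`I` on `E`, there exist two finite pointed `M(E,I)`-sets `X^•` and `Y^•` that
are not isomorphic as pointed `M(E,I)`-sets, yet have isomorphic homology
`H_s(A(X^•)) ≅ H_s(A(Y^•))` for every `s ≥ 0`. -/
theorem stmt12 {E : Type*} [LinearOrder E] [Fintype E] [Nonempty E]
    (I : E → E → Prop) (hirr : ∀ e, ¬ I e e) (hsym : ∀ e e', I e e' → I e' e) :
    ∃ (X Y : Type) (actX : Option X → E → Option X)
      (actY : Option Y → E → Option Y),
      Finite X ∧ Finite Y ∧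
      (∀ e, actX none e = none) ∧
      (∀ e, actY none e = none) ∧
      (∀ o e e', I e e' → actX (actX o e) e' = actX (actX o e') e) ∧
      (∀ o e e', I e e' → actY (actY o e) e' = actY (actY o e') e) ∧
      (¬ ∃ φ : Option X ≃ Option Y,
          φ none = none ∧ ∀ (o : Option X) (e : E), φ (actX o e) = actY (φ o) e) ∧
      (∀ s : ℕ, Nonempty
        (Hmlgy (AC I X) (Ad I actX) s ≃+ Hmlgy (AC I Y) (Ad I actY) s)) := by
  refine ⟨Bool, Bool, fun o _ => fX o, fun o _ => gY o, inferInstance, inferInstance,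
    fun _ => rfl, fun _ => rfl, ?_, ?_, ?_, ?_⟩
  · intro o e e' _
    cases o with
    | none => rfl
    | some b => cases b <;> rfl
  · intro o e e' _
    cases o with
    | none => rfl
    | some b => cases b <;> rfl
  · rintro ⟨φ, hnone, hact⟩
    have e := Classical.arbitrary E
    have h1 : φ (some false) ≠ none := by
      intro h
      exact Option.some_ne_none _ (φ.injective (h.trans hnone.symm))
    have h2 := hact (some false) e
    simp only [show fX (some false) = none from rfl, hnone] at h2
    rcases Option.ne_none_iff_exists'.mp h1 with ⟨b, hb⟩
    rw [hb] at h2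
    cases b <;> exact Option.some_ne_none _ h2.symm
  · intro s
    match s with
    | 0 =>
      exact ⟨homologyOfCongrAux _ _ _ _ (chainEquiv I psiXY 1) (chainEquiv I psiXY 0)
        (AddEquiv.refl PUnit.{1}) (fun _ => rfl)
        (chainEquiv_comm' I fX gY psiXY psi_conj 0)⟩
    | (s + 1) =>
      exact ⟨homologyOfCongrAux _ _ _ _ (chainEquiv I psiXY (s + 2))
        (chainEquiv I psiXY (s + 1)) (chainEquiv I psiXY s)
        (chainEquiv_comm' I fX gY psiXY psi_conj s)
        (chainEquiv_comm' I fX gY psiXY psi_conj (s + 1))⟩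

end PCMHomology
end
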